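/- arXiv:2106.05780 — 3 statements merged into one kernel-verified Lean document; each statement's English description precedes it below -/
import Mathlib

section
/- With U_T the minimal unitary dilation block matrix of a contraction T on F = H²_{D_{T*}}(𝔻) ⊕ H ⊕ H²_{D_T}(𝔻), one has P_H U_T^n |_H = T^n for all n ∈ ℕ. -/
set_option synthInstance.maxHeartbeats 1000000
set_option maxHeartbeats 1000000
set_option linter.unusedSectionVars false

noncomputable section Hardy

variable (E : Type*) [NormedAddCommGroup E] [InnerProductSpace ℂ E]

/-- The vector-valued Hardy space `H²_E(𝔻)`, modelled as the space of square-summable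
Taylor-coefficient sequences `ℓ²(ℕ, E)`. -/
abbrev HardySpace : Type _ := lp (fun _ : ℕ => E) 2

variable {E}

private lemma two_toReal_pos : (0:ℝ) < (2 : ENNReal).toReal := by norm_num

/-- The right-shifted coefficient sequence (multiplication by `z`). -/
def shiftFun (f : ∀ _ : ℕ, E) : ∀ _ : ℕ, E := fun n => Nat.casesOn n 0 (fun m => f m)

lemma memℓp_shiftFun (f : HardySpace E) : Memℓp (shiftFun (f : ∀ _ : ℕ, E)) 2 := by
  apply memℓp_gen
  have hs : Summable (fun i : ℕ => ‖f i‖ ^ (2 : ENNReal).toReal) :=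
    (lp.memℓp f).summable two_toReal_pos
  exact (summable_nat_add_iff 1).1 hs

/-- The left-shifted coefficient sequence (the adjoint shift `S*`). -/
def shiftAdjFun (f : ∀ _ : ℕ, E) : ∀ _ : ℕ, E := fun n => f (n + 1)

lemma memℓp_shiftAdjFun (f : HardySpace E) : Memℓp (shiftAdjFun (f : ∀ _ : ℕ, E)) 2 := by
  apply memℓp_gen
  have hs : Summable (fun i : ℕ => ‖f i‖ ^ (2 : ENNReal).toReal) :=
    (lp.memℓp f).summable two_toReal_pos
  exact (summable_nat_add_iff 1).2 hs


lemma norm_eq_of_shift (f g : HardySpace E)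
    (hg : (g : ∀ _ : ℕ, E) = shiftFun (f : ∀ _ : ℕ, E)) : ‖g‖ = ‖f‖ := by
  have hs : Summable (fun i : ℕ => ‖f i‖ ^ (2 : ENNReal).toReal) :=
    (lp.memℓp f).summable two_toReal_pos
  have hgs : Summable (fun i : ℕ => ‖g i‖ ^ (2 : ENNReal).toReal) :=
    (lp.memℓp g).summable two_toReal_pos
  rw [lp.norm_eq_tsum_rpow two_toReal_pos, lp.norm_eq_tsum_rpow two_toReal_pos]
  congr 1
  rw [Summable.tsum_eq_zero_add hgs]
  simp [hg, shiftFun, Real.zero_rpow (ne_of_gt two_toReal_pos)]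

/-- The unilateral shift `S` (multiplication by `z`) on the Hardy space, as an isometry. -/
def shiftIsometry : HardySpace E →ₗᵢ[ℂ] HardySpace E where
  toLinearMap :=
    { toFun := fun f => ⟨shiftFun (f : ∀ _ : ℕ, E), memℓp_shiftFun f⟩
      map_add' := by
        intro f g
        apply lp.ext
        funext n
        cases n <;> simp [shiftFun, lp.coeFn_add, Pi.add_apply] <;> first | rfl | (show (0 : E) = 0 + 0; simp)
      map_smul' := by
        intro c f
        apply lp.ext
        funext n
        cases n <;> simp [shiftFun, lp.coeFn_smul, Pi.smul_apply] }
  norm_map' := by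
    intro f
    exact norm_eq_of_shift f _ rfl

/-- The unilateral shift `S` on the Hardy space. -/
def shiftOp : HardySpace E →L[ℂ] HardySpace E := shiftIsometry.toContinuousLinearMap

/-- The backward shift `S*` on the Hardy space. -/
def shiftAdjOp : HardySpace E →L[ℂ] HardySpace E :=
  LinearMap.mkContinuous
    { toFun := fun f => ⟨shiftAdjFun (f : ∀ _ : ℕ, E), memℓp_shiftAdjFun f⟩
      map_add' := by
        intro f g
        apply lp.ext
        funext n
        simp [shiftAdjFun, lp.coeFn_add, Pi.add_apply] <;> rfl
      map_smul' := by
        intro c f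
        apply lp.ext
        funext n
        simp [shiftAdjFun, lp.coeFn_smul, Pi.smul_apply] }
    1 (by
      intro f
      rw [one_mul]
      apply lp.norm_le_of_tsum_le two_toReal_pos (norm_nonneg _)
      have hs : Summable (fun i : ℕ => ‖f i‖ ^ (2 : ENNReal).toReal) :=
        (lp.memℓp f).summable two_toReal_pos
      calc ∑' i : ℕ, ‖shiftAdjFun (f : ∀ _ : ℕ, E) i‖ ^ (2 : ENNReal).toReal
          ≤ ∑' i : ℕ, ‖f i‖ ^ (2 : ENNReal).toReal := by
            rw [Summable.tsum_eq_zero_add hs]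
            exact le_add_of_nonneg_left (Real.rpow_nonneg (norm_nonneg _) _)
        _ = ‖f‖ ^ (2 : ENNReal).toReal := (lp.norm_rpow_eq_tsum two_toReal_pos f).symm)

/-- Evaluation of the zeroth Taylor coefficient, `f ↦ f(0)`. -/
def eval0 : HardySpace E →L[ℂ] E :=
  LinearMap.mkContinuous
    { toFun := fun f => f 0
      map_add' := by intro f g; simp [lp.coeFn_add]
      map_smul' := by intro c f; simp [lp.coeFn_smul] }
    1 (by
      intro f
      rw [one_mul]
      exact lp.norm_apply_le_norm (by norm_num) f 0)

/-- Embedding of `E` as the constant functions in the Hardy space. -/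
def constEmb : E →L[ℂ] HardySpace E :=
  LinearMap.mkContinuous
    { toFun := fun x => lp.single 2 0 x
      map_add' := by
        intro x y
        apply lp.ext
        funext n
        by_cases h : n = 0 <;>
          simp [lp.single_apply, h, lp.coeFn_add, Pi.add_apply]
      map_smul' := by intro c x; simp }
    1 (by
      intro x
      rw [one_mul]
      have := lp.norm_single (E := fun _ : ℕ => E) (by norm_num : (0 : ENNReal) < 2) 0 x
      simpa using this.le)

/-- The orthogonal projection of the Hardy space onto the constant functions. -/
def constProj : HardySpace E →L[ℂ] HardySpace E := constEmb.comp eval0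

end Hardy
section Dilation

variable {H : Type*} [NormedAddCommGroup H] [InnerProductSpace ℂ H] [CompleteSpace H]

/-- The defect operator `D_T = (1 - T*T)^{1/2}` of an operator `T`. -/
noncomputable def defectOp (T : H →L[ℂ] H) : H →L[ℂ] H := CFC.sqrt (1 - star T * T)

/-- The defect space `𝒟_T`, the closure of the range of `D_T`. -/
noncomputable def defectSpace (T : H →L[ℂ] H) : Submodule ℂ H :=
  (LinearMap.range (defectOp T : H →ₗ[ℂ] H)).topologicalClosure

instance (T : H →L[ℂ] H) : CompleteSpace (defectSpace T) :=
  (Submodule.isClosed_topologicalClosure _).completeSpace_coe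

/-- The defect operator, with codomain restricted to the defect space. -/
noncomputable def defectOpRes (T : H →L[ℂ] H) : H →L[ℂ] defectSpace T :=
  (defectOp T).codRestrict (defectSpace T)
    (fun x => Submodule.le_topologicalClosure _ (LinearMap.mem_range_self _ x))

section Blocks

variable {A B C D : Type*} [NormedAddCommGroup A] [NormedAddCommGroup B]
  [NormedAddCommGroup C] [NormedAddCommGroup D]
  [NormedSpace ℂ A] [NormedSpace ℂ B] [NormedSpace ℂ C] [NormedSpace ℂ D]

/-- Pairing of two operators into an `ℓ²`-direct sum. -/
noncomputable def pairL2 (g : A →L[ℂ] C) (h : A →L[ℂ] D) : A →L[ℂ] WithLp 2 (C × D) :=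
  (((WithLp.prodContinuousLinearEquiv 2 ℂ C D).symm :
      (C × D) →L[ℂ] WithLp 2 (C × D))).comp (g.prod h)

/-- A `2 × 2` block operator matrix acting between `ℓ²`-direct sums. -/
noncomputable def block2 (f11 : A →L[ℂ] C) (f12 : B →L[ℂ] C)
    (f21 : A →L[ℂ] D) (f22 : B →L[ℂ] D) : WithLp 2 (A × B) →L[ℂ] WithLp 2 (C × D) :=
  (pairL2 (f11.comp (ContinuousLinearMap.fst ℂ A B) + f12.comp (ContinuousLinearMap.snd ℂ A B))
      (f21.comp (ContinuousLinearMap.fst ℂ A B) +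
        f22.comp (ContinuousLinearMap.snd ℂ A B))).comp
    ((WithLp.prodContinuousLinearEquiv 2 ℂ A B : WithLp 2 (A × B) →L[ℂ] A × B))

end Blocks

variable (T : H →L[ℂ] H)

/-- The dilation space `F = H²_{𝒟_{T*}}(𝔻) ⊕ H ⊕ H²_{𝒟_T}(𝔻)` (with `ℓ²` direct sums). -/
abbrev DilationSpace : Type _ :=
  WithLp 2 (HardySpace (defectSpace (star T)) ×
    WithLp 2 (H × HardySpace (defectSpace T)))

/-- `D_{T*} P_{𝒟_{T*}} : H²_{𝒟_{T*}}(𝔻) → H`. -/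
noncomputable def row21 : HardySpace (defectSpace (star T)) →L[ℂ] H :=
  (defectOp (star T)).comp ((defectSpace (star T)).subtypeL.comp eval0)

/-- `-T* P_{𝒟_{T*}} : H²_{𝒟_{T*}}(𝔻) → H²_{𝒟_T}(𝔻)` (with values the constant functions,
compressed into the defect space `𝒟_T`). -/
noncomputable def row31 : HardySpace (defectSpace (star T)) →L[ℂ] HardySpace (defectSpace T) :=
  constEmb.comp (((defectSpace T).orthogonalProjectionOnto).comp
    ((-(star T)).comp ((defectSpace (star T)).subtypeL.comp eval0)))

/-- `D_T : H → H²_{𝒟_T}(𝔻)`, as constant functions in the defect space. -/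
noncomputable def row32 : H →L[ℂ] HardySpace (defectSpace T) :=
  constEmb.comp (defectOpRes T)

/-- The Schäffer block matrix of the minimal unitary dilation of a contraction `T`:
`[[S*_{𝒟_{T*}}, 0, 0], [D_{T*}P_{𝒟_{T*}}, T, 0], [-T*P_{𝒟_{T*}}, D_T, S_{𝒟_T}]]`. -/
noncomputable def dilationOp : DilationSpace T →L[ℂ] DilationSpace T :=
  block2 shiftAdjOp 0
    (pairL2 (row21 T) (row31 T))
    (block2 T 0 (row32 T) shiftOp)

end Dilation

section Compression

variable {H : Type*} [NormedAddCommGroup H] [InnerProductSpace ℂ H] [CompleteSpace H]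

/-- The isometric embedding of `H` as the middle summand of the dilation space. -/
noncomputable def dilationEmb (T : H →L[ℂ] H) : H →L[ℂ] DilationSpace T :=
  pairL2 0 (pairL2 (ContinuousLinearMap.id ℂ H) 0)

/-- The orthogonal projection of the dilation space onto the middle summand `H`. -/
noncomputable def dilationProj (T : H →L[ℂ] H) : DilationSpace T →L[ℂ] H :=
  (ContinuousLinearMap.fst ℂ H (HardySpace (defectSpace T))).comp
    (((WithLp.prodContinuousLinearEquiv 2 ℂ H (HardySpace (defectSpace T))) :
        WithLp 2 (H × HardySpace (defectSpace T)) →L[ℂ] H × HardySpace (defectSpace T)).comp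
      ((ContinuousLinearMap.snd ℂ (HardySpace (defectSpace (star T)))
          (WithLp 2 (H × HardySpace (defectSpace T)))).comp
        ((WithLp.prodContinuousLinearEquiv 2 ℂ (HardySpace (defectSpace (star T)))
            (WithLp 2 (H × HardySpace (defectSpace T)))) :
          DilationSpace T →L[ℂ]
            HardySpace (defectSpace (star T)) × WithLp 2 (H × HardySpace (defectSpace T)))))

private lemma dilationOp_apply_zero (T : H →L[ℂ] H) (b : H) (c : HardySpace (defectSpace T)) :
    dilationOp T (WithLp.toLp 2 ((0 : HardySpace (defectSpace (star T))),
        (WithLp.toLp 2 (b, c) : WithLp 2 (H × HardySpace (defectSpace T))))) =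
      (WithLp.toLp 2 ((0 : HardySpace (defectSpace (star T))),
        (WithLp.toLp 2 (T b, row32 T b + shiftOp c) : WithLp 2 (H × HardySpace (defectSpace T)))) :
          DilationSpace T) := by
  simp [dilationOp, block2, pairL2]

private lemma dilationEmb_apply (T : H →L[ℂ] H) (h : H) :
    dilationEmb T h = (WithLp.toLp 2 ((0 : HardySpace (defectSpace (star T))),
        (WithLp.toLp 2 (h, 0) : WithLp 2 (H × HardySpace (defectSpace T)))) : DilationSpace T) := by
  simp [dilationEmb, pairL2]

private lemma dilationProj_apply (T : H →L[ℂ] H) (a : HardySpace (defectSpace (star T)))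
    (b : H) (c : HardySpace (defectSpace T)) :
    dilationProj T (WithLp.toLp 2 (a, (WithLp.toLp 2 (b, c) : WithLp 2 (H × HardySpace (defectSpace T)))) : DilationSpace T)
      = b := by
  simp [dilationProj]

/-- With `U_T` the minimal unitary dilation block matrix of a contraction `T`,
`P_H U_T^n |_H = T^n` for all `n ∈ ℕ`. -/
theorem dilationOp_compression_pow (T : H →L[ℂ] H) (hT : ‖T‖ ≤ 1) (n : ℕ) (h : H) :
    dilationProj T ((dilationOp T ^ n) (dilationEmb T h)) = (T ^ n) h := by
  suffices hkey : ∀ m : ℕ, ∃ c : HardySpace (defectSpace T),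
      (dilationOp T ^ m) (dilationEmb T h) =
        (WithLp.toLp 2 ((0 : HardySpace (defectSpace (star T))),
          (WithLp.toLp 2 ((T ^ m) h, c) : WithLp 2 (H × HardySpace (defectSpace T)))) : DilationSpace T) by
    obtain ⟨c, hc⟩ := hkey n
    rw [hc, dilationProj_apply]
  intro m
  induction m with
  | zero => exact ⟨0, by simpa using dilationEmb_apply T h⟩
  | succ m ih =>
      obtain ⟨c, hc⟩ := ih
      refine ⟨row32 T ((T ^ m) h) + shiftOp c, ?_⟩
      rw [pow_succ', ContinuousLinearMap.mul_apply, hc, dilationOp_apply_zero,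
        ← ContinuousLinearMap.mul_apply, ← pow_succ']

end Compression
end

section
/- Let U be a unitary operator on a Hilbert space K with U - I in the Schatten n-class B_n(K). If A is the self-adjoint operator with spectrum contained in (-π, π] such that U = e^{iA} (given by the spectral theorem via the principal branch of the logarithm), then A ∈ B_n(K). -/
set_option synthInstance.maxHeartbeats 1000000
set_option maxHeartbeats 1000000

/-- Membership in the Schatten `n`-class `B_n(H)`: the sums `∑_k |⟨T e_k, f_k⟩|^n` over all
pairs of orthonormal systems `(e_k)`, `(f_k)` are uniformly bounded (for `n ≥ 1` this is the
classical Gohberg–Krein characterization of `‖T‖_n^n < ∞`). -/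
def MemSchatten {H : Type*} [NormedAddCommGroup H] [InnerProductSpace ℂ H]
    (n : ℕ) (T : H →L[ℂ] H) : Prop :=
  ∃ C : ℝ, ∀ (e f : ℕ → H), Orthonormal ℂ e → Orthonormal ℂ f →
    ∀ s : Finset ℕ, ∑ k ∈ s, ‖(inner ℂ (T (e k)) (f k) : ℂ)‖ ^ n ≤ C

namespace LogUnitaryAux

open Real Filter

/-- the function `(x/2) / sin(x/2)` with removable singularity at `0`. -/
noncomputable def scAux (x : ℝ) : ℝ := if x = 0 then 1 else (x / 2) / Real.sin (x / 2)

noncomputable def gAux (z : ℂ) : ℂ :=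
  -Complex.I * Complex.exp (-(Complex.I * z) / 2) * (scAux z.re : ℂ)

noncomputable def tAux (x : ℝ) : ℝ := 2 / π * scAux x

noncomputable def wAux (x : ℝ) : ℝ := Real.sqrt (1 - tAux x ^ 2)

noncomputable def hpAux (z : ℂ) : ℂ :=
  Complex.I * Complex.exp (Complex.I * z / 2) * (↑(tAux z.re) + Complex.I * ↑(wAux z.re))

noncomputable def hmAux (z : ℂ) : ℂ :=
  Complex.I * Complex.exp (Complex.I * z / 2) * (↑(tAux z.re) - Complex.I * ↑(wAux z.re))

lemma sin_half_ne_zero {x : ℝ} (hx : x ∈ Set.Ioc (-π) π) (hx0 : x ≠ 0) :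
    Real.sin (x / 2) ≠ 0 := by
  have h1 : 0 < |x / 2| := by positivity
  have h2 : |x / 2| < π := by
    rw [abs_div]
    have := hx.1; have := hx.2
    have hπ := Real.pi_pos
    rw [abs_of_pos (by norm_num : (0:ℝ) < 2)]
    rw [div_lt_iff₀ (by norm_num)]
    rw [abs_lt]; constructor <;> nlinarith
  have := Real.sin_pos_of_pos_of_lt_pi h1 h2
  rcases abs_cases (x/2) with ⟨h, _⟩ | ⟨h, _⟩
  · rw [h] at this; linarith
  · rw [h] at this
    rw [Real.sin_neg] at this
    intro hc; rw [hc] at this; norm_num at this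

lemma sin_abs_half {x : ℝ} (hx : x ∈ Set.Ioc (-π) π) :
    Real.sin |x / 2| = |Real.sin (x / 2)| := by
  rcases abs_cases (x/2) with ⟨h, h'⟩ | ⟨h, h'⟩
  · rw [h, abs_of_nonneg]
    apply Real.sin_nonneg_of_nonneg_of_le_pi h'
    have := hx.2; nlinarith [Real.pi_pos]
  · have h0 : 0 ≤ Real.sin (-(x/2)) := by
      apply Real.sin_nonneg_of_nonneg_of_le_pi (by linarith)
      have := hx.1; nlinarith [Real.pi_pos]
    rw [Real.sin_neg] at h0
    rw [h, Real.sin_neg, abs_of_nonpos (by linarith)]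

lemma scAux_abs_le {x : ℝ} (hx : x ∈ Set.Ioc (-π) π) : |scAux x| ≤ π / 2 := by
  rcases eq_or_ne x 0 with rfl | hx0
  · simp [scAux]
    nlinarith [Real.pi_gt_three]
  · rw [scAux, if_neg hx0, abs_div]
    have hs := sin_half_ne_zero hx hx0
    have hs' : 0 < |Real.sin (x / 2)| := abs_pos.mpr hs
    have habs : |x / 2| ≤ π / 2 := by
      rw [abs_le]; have := hx.1; have := hx.2
      constructor <;> nlinarith [Real.pi_pos]
    have hkey : 2 / π * |x / 2| ≤ |Real.sin (x / 2)| := by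
      have h1 := Real.mul_le_sin (abs_nonneg (x/2)) habs
      rwa [sin_abs_half hx] at h1
    rw [div_le_iff₀ hs']
    have hπ := Real.pi_pos
    calc |x / 2| = π / 2 * (2 / π * |x / 2|) := by field_simp
    _ ≤ π / 2 * |Real.sin (x / 2)| := by nlinarith

lemma tendsto_div_sin : Tendsto (fun y : ℝ => y / Real.sin y) (nhdsWithin 0 {0}ᶜ) (nhds 1) := by
  have h := (Real.hasDerivAt_sin 0)
  rw [hasDerivAt_iff_tendsto_slope] at h
  rw [Real.cos_zero] at h
  have h2 : Tendsto (fun y : ℝ => (slope Real.sin 0 y)⁻¹) (nhdsWithin 0 {0}ᶜ) (nhds 1) := by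
    simpa using h.inv₀ (by norm_num)
  refine h2.congr fun y => ?_
  simp [slope_def_field, div_eq_mul_inv]

lemma scAux_continuousAt {x : ℝ} (hx : x ∈ Set.Ioc (-π) π) : ContinuousAt scAux x := by
  rcases eq_or_ne x 0 with rfl | hx0
  · rw [ContinuousAt]
    have h0 : scAux 0 = 1 := by simp [scAux]
    rw [h0, ← nhdsNE_sup_pure (0:ℝ)]
    rw [tendsto_sup]
    constructor
    · have hhalf : Tendsto (fun y : ℝ => y / 2) (nhdsWithin 0 {0}ᶜ) (nhdsWithin 0 {0}ᶜ) := by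
        rw [tendsto_nhdsWithin_iff]
        constructor
        · simpa using (continuous_id.div_const 2).tendsto' 0 0 (by norm_num)
            |>.mono_left nhdsWithin_le_nhds
        · filter_upwards [self_mem_nhdsWithin] with y hy
          simp only [Set.mem_compl_iff, Set.mem_singleton_iff] at hy ⊢
          intro hc; exact hy (by linarith)
      have := tendsto_div_sin.comp hhalf
      refine this.congr' ?_
      filter_upwards [self_mem_nhdsWithin] with y hy
      simp only [Set.mem_compl_iff, Set.mem_singleton_iff] at hy
      simp [scAux, hy]
    · rw [tendsto_pure_left]
      intro s hs
      simpa [h0] using mem_of_mem_nhds hs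
  · have hsin : Real.sin (x / 2) ≠ 0 := sin_half_ne_zero hx hx0
    have hcont : ContinuousAt (fun y : ℝ => (y / 2) / Real.sin (y / 2)) x := by
      exact (continuousAt_id.div_const 2).div
        ((Real.continuous_sin.continuousAt).comp (continuousAt_id.div_const 2)) hsin
    refine hcont.congr ?_
    have hopen : {y : ℝ | y ≠ 0} ∈ nhds x := isOpen_ne.mem_nhds hx0
    filter_upwards [hopen] with y hy
    simp [scAux, hy]

lemma exp_half_mul (x : ℝ) :
    Complex.exp (Complex.I * x / 2) * Complex.exp (-(Complex.I * x) / 2) = 1 := by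
  rw [← Complex.exp_add, show Complex.I * ↑x / 2 + -(Complex.I * ↑x) / 2 = 0 by ring,
    Complex.exp_zero]

lemma gAux_mul {x : ℝ} (hx : x ∈ Set.Ioc (-π) π) :
    gAux x * (Complex.exp (Complex.I * x) - 1) = x := by
  rcases eq_or_ne x 0 with rfl | hx0
  · simp [gAux]
  · have hsin : Real.sin (x / 2) ≠ 0 := sin_half_ne_zero hx hx0
    have hsinC : (Real.sin (x / 2) : ℂ) ≠ 0 := by exact_mod_cast hsin
    set a := Complex.exp (Complex.I * x / 2) with ha
    set b := Complex.exp (-(Complex.I * x) / 2) with hb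
    have hab : a * b = 1 := exp_half_mul x
    have haa : a * a = Complex.exp (Complex.I * x) := by
      rw [ha, ← Complex.exp_add]; ring_nf
    have hsinab : Complex.sin (↑x / 2) = (b - a) * Complex.I / 2 := by
      rw [Complex.sin, ha, hb]
      congr 3
      · congr 1; ring
      · congr 1; ring
    rw [gAux]
    simp only [Complex.ofReal_re]
    rw [scAux, if_neg hx0]
    push_cast
    have hsinC' : Complex.sin (↑x / 2) ≠ 0 := by
      rw [show (↑x / 2 : ℂ) = ((x / 2 : ℝ) : ℂ) by push_cast; ring, ← Complex.ofReal_sin]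
      exact_mod_cast hsin
    have hba : b - a ≠ 0 := by
      intro hc
      rw [hsinab, hc] at hsinC'
      simp at hsinC'
    rw [hsinab, ← haa, ← hb]
    have haz : a ≠ 0 := Complex.exp_ne_zero _
    have hbz : b ≠ 0 := Complex.exp_ne_zero _
    have hI : Complex.I ≠ 0 := Complex.I_ne_zero
    field_simp
    linear_combination (-↑x * a) * hab

lemma conj_exp_half (x : ℝ) :
    (starRingEnd ℂ) (Complex.exp (Complex.I * x / 2)) = Complex.exp (-(Complex.I * x) / 2) := by
  rw [← Complex.exp_conj]
  congr 1
  simp only [map_div₀, map_neg, map_mul, Complex.conj_I, Complex.conj_ofReal, map_ofNat]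
  ring

lemma conj_exp_half' (x : ℝ) :
    (starRingEnd ℂ) (Complex.exp (-(Complex.I * x) / 2)) = Complex.exp (Complex.I * x / 2) := by
  rw [← Complex.exp_conj]
  congr 1
  simp only [map_div₀, map_neg, map_mul, Complex.conj_I, Complex.conj_ofReal, map_ofNat]
  ring

lemma gAux_conj (x : ℝ) :
    (starRingEnd ℂ) (gAux x) = (↑π / 4) * (hpAux x + hmAux x) := by
  rw [gAux, hpAux, hmAux]
  simp only [Complex.ofReal_re, map_mul, map_neg, Complex.conj_I, conj_exp_half',
    Complex.conj_ofReal, neg_neg]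
  rw [tAux]
  push_cast
  have hπ : (π : ℂ) ≠ 0 := by exact_mod_cast Real.pi_ne_zero
  field_simp
  ring

lemma tAux_sq_le {x : ℝ} (hx : x ∈ Set.Ioc (-π) π) : tAux x ^ 2 ≤ 1 := by
  have h := scAux_abs_le hx
  have hπ := Real.pi_pos
  have : |tAux x| ≤ 1 := by
    rw [tAux, abs_mul, abs_of_nonneg (by positivity : (0:ℝ) ≤ 2 / π)]
    calc 2 / π * |scAux x| ≤ 2 / π * (π / 2) := by
          exact mul_le_mul_of_nonneg_left h (by positivity)
    _ = 1 := by field_simp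
  calc tAux x ^ 2 = |tAux x| ^ 2 := (sq_abs _).symm
  _ ≤ 1 ^ 2 := by nlinarith [abs_nonneg (tAux x)]
  _ = 1 := one_pow 2

lemma hpAux_conj_mul {x : ℝ} (hx : x ∈ Set.Ioc (-π) π) :
    (starRingEnd ℂ) (hpAux x) * hpAux x = 1 ∧
    (starRingEnd ℂ) (hmAux x) * hmAux x = 1 := by
  have hw : (wAux x : ℝ) ^ 2 = 1 - tAux x ^ 2 := by
    rw [wAux, Real.sq_sqrt (by linarith [tAux_sq_le hx])]
  have hwC : ((wAux x : ℂ)) ^ 2 = 1 - (tAux x : ℂ) ^ 2 := by exact_mod_cast hw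
  have hab := exp_half_mul x
  constructor
  · rw [hpAux]
    simp only [Complex.ofReal_re, map_mul, map_add, Complex.conj_I, conj_exp_half,
      Complex.conj_ofReal]
    linear_combination ((-Complex.I ^ 2) * ((tAux x : ℂ) ^ 2 - Complex.I ^ 2 * (wAux x : ℂ) ^ 2)) * hab +
      (-Complex.I ^ 2) * hwC + (-(1 - Complex.I ^ 2 * (wAux x : ℂ) ^ 2)) * Complex.I_sq
  · rw [hmAux]
    simp only [Complex.ofReal_re, map_mul, map_sub, Complex.conj_I, conj_exp_half,
      Complex.conj_ofReal]
    linear_combination ((-Complex.I ^ 2) * ((tAux x : ℂ) ^ 2 - Complex.I ^ 2 * (wAux x : ℂ) ^ 2)) * hab +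
      (-Complex.I ^ 2) * hwC + (-(1 - Complex.I ^ 2 * (wAux x : ℂ) ^ 2)) * Complex.I_sq

end LogUnitaryAux

open LogUnitaryAux

open Real in
/-- Let `U` be unitary on `K` with `U - I ∈ B_n(K)`. If `A` is the self-adjoint operator with
spectrum in `(-π, π]` such that `U = e^{iA}`, then `A ∈ B_n(K)`. -/
theorem log_unitary_memSchatten {K : Type*} [NormedAddCommGroup K] [InnerProductSpace ℂ K]
    [CompleteSpace K] (n : ℕ) (U A : K →L[ℂ] K)
    (hU : U ∈ unitary (K →L[ℂ] K)) (hUn : MemSchatten n (U - 1))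
    (hA : IsSelfAdjoint A) (hspec : spectrum ℝ A ⊆ Set.Ioc (-π) π)
    (hexp : NormedSpace.exp (Complex.I • A) = U) :
    MemSchatten n A := by
  classical
  have hAn : IsStarNormal A := hA.isStarNormal
  have himg : algebraMap ℝ ℂ '' spectrum ℝ A = spectrum ℂ A :=
    hA.spectrumRestricts.algebraMap_image
  have hσ : ∀ z ∈ spectrum ℂ A, ∃ x : ℝ, x ∈ Set.Ioc (-π) π ∧ (x : ℂ) = z := by
    intro z hz
    rw [← himg] at hz
    obtain ⟨x, hx, rfl⟩ := hz
    exact ⟨x, hspec hx, rfl⟩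
  -- continuity facts
  have hcontSC : ∀ z ∈ spectrum ℂ A, ContinuousAt scAux z.re := by
    intro z hz
    obtain ⟨x, hx, rfl⟩ := hσ z hz
    simpa using scAux_continuousAt hx
  have hg_cont : ContinuousOn gAux (spectrum ℂ A) := by
    intro z hz
    apply ContinuousAt.continuousWithinAt
    refine ContinuousAt.mul (ContinuousAt.mul continuousAt_const ?_) ?_
    · exact (Complex.continuous_exp.continuousAt).comp
        (((continuous_const.mul continuous_id).neg.div_const 2).continuousAt)
    · exact Complex.continuous_ofReal.continuousAt.comp
        ((hcontSC z hz).comp Complex.continuous_re.continuousAt)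
  have ht_cont : ∀ z ∈ spectrum ℂ A, ContinuousAt (fun w : ℂ => tAux w.re) z := by
    intro z hz
    exact (continuousAt_const.mul (hcontSC z hz)).comp' Complex.continuous_re.continuousAt
  have hw_cont : ∀ z ∈ spectrum ℂ A, ContinuousAt (fun w : ℂ => wAux w.re) z := by
    intro z hz
    exact Real.continuous_sqrt.continuousAt.comp
      (continuousAt_const.sub ((ht_cont z hz).pow 2))
  have hp_cont : ContinuousOn hpAux (spectrum ℂ A) := by
    intro z hz
    apply ContinuousAt.continuousWithinAt
    refine ContinuousAt.mul (ContinuousAt.mul continuousAt_const ?_) (ContinuousAt.add ?_ ?_)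
    · exact (Complex.continuous_exp.continuousAt).comp
        (((continuous_const.mul continuous_id).div_const 2).continuousAt)
    · exact Complex.continuous_ofReal.continuousAt.comp (ht_cont z hz)
    · exact continuousAt_const.mul
        (Complex.continuous_ofReal.continuousAt.comp (hw_cont z hz))
  have hm_cont : ContinuousOn hmAux (spectrum ℂ A) := by
    intro z hz
    apply ContinuousAt.continuousWithinAt
    refine ContinuousAt.mul (ContinuousAt.mul continuousAt_const ?_) (ContinuousAt.sub ?_ ?_)
    · exact (Complex.continuous_exp.continuousAt).comp
        (((continuous_const.mul continuous_id).div_const 2).continuousAt)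
    · exact Complex.continuous_ofReal.continuousAt.comp (ht_cont z hz)
    · exact continuousAt_const.mul
        (Complex.continuous_ofReal.continuousAt.comp (hw_cont z hz))
  have hfe_cont : Continuous (fun z : ℂ => Complex.exp (Complex.I * z) - 1) :=
    (Complex.continuous_exp.comp (continuous_const.mul continuous_id)).sub continuous_const
  have hexp_cont : Continuous (fun z : ℂ => Complex.exp (Complex.I * z)) :=
    Complex.continuous_exp.comp (continuous_const.mul continuous_id)
  -- `U` as a continuous functional calculus of `A`
  have hIA : IsStarNormal (Complex.I • A) := by
    have hst : star (Complex.I • A) = (-Complex.I) • A := by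
      rw [star_smul, Complex.star_def, Complex.conj_I, hA.star_eq]
    constructor
    rw [hst]
    show -Complex.I • A * (Complex.I • A) = Complex.I • A * (-Complex.I • A)
    rw [smul_mul_smul_comm, smul_mul_smul_comm]
    congr 1
    ring
  have hU1 : U = cfc (fun z : ℂ => Complex.exp (Complex.I * z)) A := by
    have hcomp := cfc_comp_smul (Complex.I) (Complex.exp) A
      (Complex.continuous_exp.continuousOn) hAn
    rw [← hexp, ← CFC.complex_exp_eq_normedSpace_exp (a := Complex.I • A) hIA, ← hcomp]
    exact (cfc_congr (fun z _ => by simp [smul_eq_mul])).symm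
  have hU2 : U - 1 = cfc (fun z : ℂ => Complex.exp (Complex.I * z) - 1) A := by
    rw [cfc_sub (fun z : ℂ => Complex.exp (Complex.I * z)) (fun _ : ℂ => (1:ℂ)) A
      hexp_cont.continuousOn continuousOn_const, cfc_const_one ℂ A hAn, hU1]
  -- factorization `A = cfc gAux A * (U - 1)`
  have hfac : cfc gAux A * (U - 1) = A := by
    rw [hU2, ← cfc_mul gAux _ A hg_cont hfe_cont.continuousOn]
    have heq : (spectrum ℂ A).EqOn
        (fun z => gAux z * (Complex.exp (Complex.I * z) - 1)) id := by
      intro z hz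
      obtain ⟨x, hx, rfl⟩ := hσ z hz
      exact gAux_mul hx
    rw [cfc_congr heq, cfc_id ℂ A hAn]
  set B := cfc gAux A with hB
  set Vp := cfc hpAux A with hVp
  set Vm := cfc hmAux A with hVm
  -- `star B` as a combination of two unitaries
  have hstarB : star B = ((π : ℂ)/4) • (Vp + Vm) := by
    rw [hB, ← cfc_star gAux A]
    have h1 : (spectrum ℂ A).EqOn (fun z => star (gAux z))
        (fun z => ((π:ℂ)/4) * (hpAux z + hmAux z)) := by
      intro z hz
      obtain ⟨x, hx, rfl⟩ := hσ z hz
      exact gAux_conj x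
    rw [cfc_congr h1,
      cfc_const_mul ((π:ℂ)/4) (fun z => hpAux z + hmAux z) A (hp_cont.add hm_cont),
      cfc_add A hpAux hmAux hp_cont hm_cont]
  have hVp1 : star Vp * Vp = 1 := by
    rw [hVp, ← cfc_star hpAux A, ← cfc_mul _ _ A (hp_cont.star) hp_cont]
    have h1 : (spectrum ℂ A).EqOn (fun z => star (hpAux z) * hpAux z) (fun _ => (1:ℂ)) := by
      intro z hz
      obtain ⟨x, hx, rfl⟩ := hσ z hz
      exact (hpAux_conj_mul hx).1
    rw [cfc_congr h1, cfc_const_one ℂ A hAn]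
  have hVm1 : star Vm * Vm = 1 := by
    rw [hVm, ← cfc_star hmAux A, ← cfc_mul _ _ A (hm_cont.star) hm_cont]
    have h1 : (spectrum ℂ A).EqOn (fun z => star (hmAux z) * hmAux z) (fun _ => (1:ℂ)) := by
      intro z hz
      obtain ⟨x, hx, rfl⟩ := hσ z hz
      exact (hpAux_conj_mul hx).2
    rw [cfc_congr h1, cfc_const_one ℂ A hAn]
  -- orthonormality is preserved by isometries
  have hinner : ∀ (V : K →L[ℂ] K), star V * V = 1 →
      ∀ x y : K, (inner ℂ (V x) (V y) : ℂ) = inner ℂ x y := by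
    intro V hV x y
    have h1 : ContinuousLinearMap.adjoint V (V y) = y := by
      have : ContinuousLinearMap.adjoint V (V y) = (star V * V) y := by
        rw [ContinuousLinearMap.star_eq_adjoint]; rfl
      rw [this, hV]; rfl
    calc (inner ℂ (V x) (V y) : ℂ)
        = inner ℂ x (ContinuousLinearMap.adjoint V (V y)) :=
          (ContinuousLinearMap.adjoint_inner_right V x (V y)).symm
    _ = inner ℂ x y := by rw [h1]
  have horth : ∀ (V : K →L[ℂ] K), star V * V = 1 → ∀ {f : ℕ → K}, Orthonormal ℂ f →
      Orthonormal ℂ (fun k => V (f k)) := by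
    intro V hV f hf
    rw [orthonormal_iff_ite] at hf ⊢
    intro i j
    rw [hinner V hV]
    exact hf i j
  -- the final estimate
  obtain ⟨C, hC⟩ := hUn
  set D := max C 0 with hD
  refine ⟨(π/4)^n * 2^(n-1) * (D + D), ?_⟩
  intro e f he hf s
  have hπ4 : (0:ℝ) ≤ π / 4 := by positivity
  have hterm : ∀ k, ‖(inner ℂ (A (e k)) (f k) : ℂ)‖ ^ n ≤
      (π/4)^n * 2^(n-1) * (‖(inner ℂ ((U - 1) (e k)) (Vp (f k)) : ℂ)‖ ^ n +
        ‖(inner ℂ ((U - 1) (e k)) (Vm (f k)) : ℂ)‖ ^ n) := by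
    intro k
    have h1 : (inner ℂ (A (e k)) (f k) : ℂ) =
        ((π:ℂ)/4) * (inner ℂ ((U - 1) (e k)) (Vp (f k)) + inner ℂ ((U - 1) (e k)) (Vm (f k))) := by
      conv_lhs => rw [← hfac]
      rw [ContinuousLinearMap.mul_apply]
      calc (inner ℂ (B ((U - 1) (e k))) (f k) : ℂ)
          = inner ℂ ((U - 1) (e k)) (ContinuousLinearMap.adjoint B (f k)) := by
            rw [ContinuousLinearMap.adjoint_inner_right]
      _ = inner ℂ ((U - 1) (e k)) ((((π : ℂ)/4) • (Vp + Vm)) (f k)) := by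
            rw [← ContinuousLinearMap.star_eq_adjoint, hstarB]
      _ = ((π:ℂ)/4) * (inner ℂ ((U - 1) (e k)) (Vp (f k)) + inner ℂ ((U - 1) (e k)) (Vm (f k))) := by
            rw [ContinuousLinearMap.smul_apply, inner_smul_right, ContinuousLinearMap.add_apply,
              inner_add_right]
    have h2 : ‖(inner ℂ (A (e k)) (f k) : ℂ)‖ ≤
        (π/4) * (‖(inner ℂ ((U - 1) (e k)) (Vp (f k)) : ℂ)‖ +
          ‖(inner ℂ ((U - 1) (e k)) (Vm (f k)) : ℂ)‖) := by
      rw [h1, norm_mul]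
      have : ‖((π:ℂ)/4)‖ = π/4 := by
        rw [show ((π:ℂ)/4) = ((π/4 : ℝ) : ℂ) by push_cast; ring, Complex.norm_real,
          Real.norm_of_nonneg hπ4]
      rw [this]
      exact mul_le_mul_of_nonneg_left (norm_add_le _ _) hπ4
    calc ‖(inner ℂ (A (e k)) (f k) : ℂ)‖ ^ n
        ≤ ((π/4) * (‖(inner ℂ ((U - 1) (e k)) (Vp (f k)) : ℂ)‖ +
            ‖(inner ℂ ((U - 1) (e k)) (Vm (f k)) : ℂ)‖)) ^ n :=
          pow_le_pow_left₀ (norm_nonneg _) h2 n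
    _ = (π/4)^n * (‖(inner ℂ ((U - 1) (e k)) (Vp (f k)) : ℂ)‖ +
          ‖(inner ℂ ((U - 1) (e k)) (Vm (f k)) : ℂ)‖) ^ n := mul_pow _ _ n
    _ ≤ (π/4)^n * (2^(n-1) * (‖(inner ℂ ((U - 1) (e k)) (Vp (f k)) : ℂ)‖ ^ n +
          ‖(inner ℂ ((U - 1) (e k)) (Vm (f k)) : ℂ)‖ ^ n)) := by
          refine mul_le_mul_of_nonneg_left ?_ (by positivity)
          exact add_pow_le (norm_nonneg _) (norm_nonneg _) n
    _ = (π/4)^n * 2^(n-1) * (‖(inner ℂ ((U - 1) (e k)) (Vp (f k)) : ℂ)‖ ^ n +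
          ‖(inner ℂ ((U - 1) (e k)) (Vm (f k)) : ℂ)‖ ^ n) := by ring
  have hsum : ∑ k ∈ s, ‖(inner ℂ (A (e k)) (f k) : ℂ)‖ ^ n ≤
      (π/4)^n * 2^(n-1) * ((∑ k ∈ s, ‖(inner ℂ ((U - 1) (e k)) (Vp (f k)) : ℂ)‖ ^ n) +
        (∑ k ∈ s, ‖(inner ℂ ((U - 1) (e k)) (Vm (f k)) : ℂ)‖ ^ n)) := by
    calc ∑ k ∈ s, ‖(inner ℂ (A (e k)) (f k) : ℂ)‖ ^ n
        ≤ ∑ k ∈ s, (π/4)^n * 2^(n-1) * (‖(inner ℂ ((U - 1) (e k)) (Vp (f k)) : ℂ)‖ ^ n +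
            ‖(inner ℂ ((U - 1) (e k)) (Vm (f k)) : ℂ)‖ ^ n) :=
          Finset.sum_le_sum fun k _ => hterm k
    _ = (π/4)^n * 2^(n-1) * ((∑ k ∈ s, ‖(inner ℂ ((U - 1) (e k)) (Vp (f k)) : ℂ)‖ ^ n) +
          (∑ k ∈ s, ‖(inner ℂ ((U - 1) (e k)) (Vm (f k)) : ℂ)‖ ^ n)) := by
        rw [← Finset.mul_sum, ← Finset.sum_add_distrib]
  refine hsum.trans ?_
  have hp_bound : ∑ k ∈ s, ‖(inner ℂ ((U - 1) (e k)) (Vp (f k)) : ℂ)‖ ^ n ≤ D := by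
    refine le_trans (hC e (fun k => Vp (f k)) he (horth Vp hVp1 hf) s) (le_max_left _ _)
  have hm_bound : ∑ k ∈ s, ‖(inner ℂ ((U - 1) (e k)) (Vm (f k)) : ℂ)‖ ^ n ≤ D := by
    refine le_trans (hC e (fun k => Vm (f k)) he (horth Vm hVm1 hf) s) (le_max_left _ _)
  have : (0:ℝ) ≤ (π/4)^n * 2^(n-1) := by positivity
  nlinarith [hp_bound, hm_bound]
end

section
/- In the recursion p_{0,1} = 1, p_{0,q}(λ) = (-1/2)(1+λ²)p_{0,q-1}(λ), p_{k,q}(λ) = (-1/2)[(1+λ²)(p_{k,q-1} + p'_{k-1,q-1})(λ) + 2λ p_{k-1,q-1}(λ)] for 1 ≤ k ≤ q-2, and p_{q-1,q}(λ) = (-1/2)[(1+λ²)p'_{q-2,q-1}(λ) + 2λ p_{q-2,q-1}(λ)], the polynomial p_{k,q} has degree exactly 2(q-1) - k for all 0 ≤ k ≤ q-1. -/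
set_option synthInstance.maxHeartbeats 1000000
set_option maxHeartbeats 1000000

open Polynomial in
/-- The polynomials `p_{k,q}` from the Cayley change of variables: `p_{0,1} = 1`,
`p_{0,q} = -(1/2)(1+λ²) p_{0,q-1}`,
`p_{k,q} = -(1/2)[(1+λ²)(p_{k,q-1} + p'_{k-1,q-1}) + 2λ p_{k-1,q-1}]` for `1 ≤ k ≤ q-2`, and
`p_{q-1,q} = -(1/2)[(1+λ²) p'_{q-2,q-1} + 2λ p_{q-2,q-1}]`
(with the convention `p_{k,q} = 0` for `k ≥ q`, which subsumes the last case). -/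
noncomputable def cayleyPoly : ℕ → ℕ → Polynomial ℝ
  | _, 0 => 0
  | k, 1 => if k = 0 then 1 else 0
  | 0, (q+2) => C (-(1/2)) * ((1 + X ^ 2) * cayleyPoly 0 (q+1))
  | (k+1), (q+2) => C (-(1/2)) *
      ((1 + X ^ 2) * (cayleyPoly (k+1) (q+1) + derivative (cayleyPoly k (q+1)))
        + C 2 * X * cayleyPoly k (q+1))

open Polynomial

lemma cayleyPoly_zero_of_le : ∀ q k : ℕ, q ≤ k → cayleyPoly k q = 0 := by
  intro q
  induction q with
  | zero => intro k _; simp [cayleyPoly]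
  | succ q ih =>
    cases q with
    | zero =>
      intro k hk
      obtain ⟨k', rfl⟩ : ∃ k', k = k' + 1 := ⟨k - 1, by omega⟩
      simp [cayleyPoly]
    | succ q' =>
      intro k hk
      obtain ⟨k', rfl⟩ : ∃ k', k = k' + 1 := ⟨k - 1, by omega⟩
      have h1 := ih (k' + 1) (by omega)
      have h2 := ih k' (by omega)
      rw [cayleyPoly, h1, h2]
      simp

lemma natDegree_one_add_X_sq : ((1 : ℝ[X]) + X ^ 2).natDegree = 2 := by
  compute_degree!

lemma leadingCoeff_one_add_X_sq : ((1 : ℝ[X]) + X ^ 2).leadingCoeff = 1 := by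
  have h : ((1 : ℝ[X]) + X ^ 2) = X ^ 2 + C 1 := by rw [C_1, add_comm]
  rw [h]
  exact Polynomial.monic_X_pow_add_C (1 : ℝ) (two_ne_zero)

lemma cayleyPoly_one_two : cayleyPoly 1 2 = C (-1) * X := by
  have h1 : cayleyPoly 1 1 = 0 := by simp [cayleyPoly]
  have h2 : cayleyPoly 0 1 = 1 := by simp [cayleyPoly]
  rw [show (2 : ℕ) = 0 + 2 from rfl, cayleyPoly, h1, h2]
  simp
  rw [← mul_assoc, ← C_mul]
  norm_num

lemma cayleyPoly_aux : ∀ q : ℕ, 1 ≤ q → ∀ k : ℕ, k ≤ q - 1 →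
    cayleyPoly k q ≠ 0 ∧ (cayleyPoly k q).natDegree = 2 * (q - 1) - k ∧
      0 < (-1 : ℝ) ^ (q - 1) * (cayleyPoly k q).leadingCoeff := by
  intro q
  induction q with
  | zero => intro h; omega
  | succ q ih =>
    cases q with
    | zero =>
      intro _ k hk
      have hk0 : k = 0 := by omega
      subst hk0
      have h1 : cayleyPoly 0 1 = 1 := by simp [cayleyPoly]
      rw [h1]
      norm_num
    | succ q' =>
      intro _ k hk
      have hq1 : (1 : ℕ) ≤ q' + 1 := by omega
      have hne : ((1 : ℝ[X]) + X ^ 2) ≠ 0 := by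
        intro h
        have := natDegree_one_add_X_sq
        rw [h] at this
        simp at this
      cases k with
      | zero =>
        obtain ⟨hB0, hBdeg, hBlead⟩ := ih hq1 0 (by omega)
        set B := cayleyPoly 0 (q' + 1) with hB
        have hP : cayleyPoly 0 (q' + 2) = C (-(1/2)) * ((1 + X ^ 2) * B) := by
          rw [cayleyPoly]
        have hmul0 : ((1 : ℝ[X]) + X ^ 2) * B ≠ 0 := mul_ne_zero hne hB0
        have hP0 : cayleyPoly 0 (q' + 2) ≠ 0 := by
          rw [hP]
          exact mul_ne_zero (by norm_num) hmul0
        refine ⟨hP0, ?_, ?_⟩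
        · rw [hP, natDegree_C_mul (by norm_num : (-(1/2) : ℝ) ≠ 0),
            natDegree_mul hne hB0, natDegree_one_add_X_sq, hBdeg]
          omega
        · rw [hP, leadingCoeff_mul, leadingCoeff_mul, leadingCoeff_C,
            leadingCoeff_one_add_X_sq]
          have hpow : ((-1 : ℝ)) ^ (q' + 2 - 1) = (-1) * (-1) ^ (q' + 1 - 1) := by
            rw [show q' + 2 - 1 = (q' + 1 - 1) + 1 by omega, pow_succ]
            ring
          rw [hpow]
          nlinarith [hBlead]
      | succ k' =>
        have hk' : k' ≤ q' := by omega
        rcases Nat.eq_zero_or_pos q' with hq0 | hq'pos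
        · -- q' = 0, k' = 0 : explicit polynomial -X
          have hk0 : k' = 0 := by omega
          subst hq0; subst hk0
          rw [cayleyPoly_one_two]
          refine ⟨by intro h; simpa using congrArg (Polynomial.coeff · 1) h, ?_, ?_⟩
          · rw [natDegree_C_mul (by norm_num : (-1 : ℝ) ≠ 0), natDegree_X]
          · rw [leadingCoeff_mul, leadingCoeff_C, leadingCoeff_X]
            norm_num
        · -- main case: q' ≥ 1
          obtain ⟨hB0, hBdeg, hBlead⟩ := ih hq1 k' (by omega)
          set A := cayleyPoly (k' + 1) (q' + 1) with hAdef
          set B := cayleyPoly k' (q' + 1) with hBdef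
          obtain ⟨e, he⟩ : ∃ e, 2 * (q' + 1 - 1) - k' = e + 1 := ⟨2 * q' - k' - 1, by omega⟩
          have hBd : B.natDegree = e + 1 := by rw [hBdeg, he]
          have hBlc : B.coeff (e + 1) = B.leadingCoeff := by
            rw [← hBd]; rfl
          -- degree facts about A
          have hAfacts : A.natDegree ≤ e ∧ 0 ≤ (-1 : ℝ) ^ (q' + 1 - 1) * A.coeff e := by
            rcases Nat.lt_or_ge k' q' with hlt | hge
            · obtain ⟨hA0, hAdeg, hAlead⟩ := ih hq1 (k' + 1) (by omega)
              have hAe : A.natDegree = e := by rw [hAdeg]; omega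
              refine ⟨le_of_eq hAe, ?_⟩
              rw [← hAe, Polynomial.coeff_natDegree]
              exact le_of_lt hAlead
            · have hA0 : A = 0 := cayleyPoly_zero_of_le (q' + 1) (k' + 1) (by omega)
              rw [hA0]; simp
          obtain ⟨hAd, hAsign⟩ := hAfacts
          set S : ℝ[X] := (1 + X ^ 2) * (A + derivative B) + C 2 * X * B with hSdef
          have hP : cayleyPoly (k' + 1) (q' + 2) = C (-(1/2)) * S := by
            rw [cayleyPoly]
          -- coefficient of S at e + 2
          have hAc2 : A.coeff (e + 2) = 0 :=
            coeff_eq_zero_of_natDegree_lt (by omega)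
          have hdBc2 : (derivative B).coeff (e + 2) = 0 := by
            rw [coeff_derivative]
            rw [coeff_eq_zero_of_natDegree_lt (by omega)]
            ring
          have hdBce : (derivative B).coeff e = B.coeff (e + 1) * (e + 1) :=
            coeff_derivative B e
          have hScoeff : S.coeff (e + 2)
              = A.coeff e + B.coeff (e + 1) * (e + 1) + 2 * B.coeff (e + 1) := by
            rw [hSdef]
            rw [coeff_add, add_mul, one_mul, coeff_add, mul_comm (X ^ 2)]
            rw [coeff_mul_X_pow' (A + derivative B) 2 (e + 2)]
            rw [mul_assoc, coeff_C_mul, mul_comm X B, show e + 2 = (e + 1) + 1 from rfl,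
              coeff_mul_X]
            simp only [coeff_add, hAc2, hdBc2, if_pos (by omega : 2 ≤ e + 1 + 1)]
            have : e + 1 + 1 - 2 = e := by omega
            rw [this, hdBce]
            ring
          -- sign of the coefficient
          have hsign : 0 < (-1 : ℝ) ^ (q' + 1 - 1) * S.coeff (e + 2) := by
            rw [hScoeff, hBlc]
            have h1 : (0:ℝ) < (-1 : ℝ) ^ (q' + 1 - 1) * B.leadingCoeff := hBlead
            nlinarith [hAsign, h1, sq_nonneg ((e : ℝ) + 1)]
          have hSc0 : S.coeff (e + 2) ≠ 0 := by
            intro h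
            rw [h, mul_zero] at hsign
            exact lt_irrefl 0 hsign
          -- degree bound for S
          have hSdle : S.natDegree ≤ e + 2 := by
            rw [hSdef]
            refine le_trans (natDegree_add_le _ _) (max_le ?_ ?_)
            · refine le_trans (natDegree_mul_le) ?_
              rw [natDegree_one_add_X_sq]
              have : (A + derivative B).natDegree ≤ e := by
                refine le_trans (natDegree_add_le _ _) (max_le hAd ?_)
                refine le_trans (natDegree_derivative_le B) ?_
                rw [hBd]; omega
              omega
            · refine le_trans (natDegree_mul_le) ?_
              have h1 : (C (2:ℝ) * X).natDegree ≤ 1 := by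
                refine le_trans (natDegree_mul_le) ?_
                simp
              rw [hBd]
              omega
          have hPc : (cayleyPoly (k' + 1) (q' + 2)).coeff (e + 2) = -(1/2) * S.coeff (e + 2) := by
            rw [hP, coeff_C_mul]
          have hPc0 : (cayleyPoly (k' + 1) (q' + 2)).coeff (e + 2) ≠ 0 := by
            rw [hPc]
            exact mul_ne_zero (by norm_num) hSc0
          have hP0 : cayleyPoly (k' + 1) (q' + 2) ≠ 0 := by
            intro h
            rw [h] at hPc0
            simp at hPc0
          have hPd : (cayleyPoly (k' + 1) (q' + 2)).natDegree = e + 2 := by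
            refine le_antisymm ?_ (le_natDegree_of_ne_zero hPc0)
            rw [hP]
            refine le_trans (natDegree_mul_le) ?_
            simpa using hSdle
          refine ⟨hP0, by rw [hPd]; omega, ?_⟩
          have hlcP : (cayleyPoly (k' + 1) (q' + 2)).leadingCoeff
              = -(1/2) * S.coeff (e + 2) := by
            rw [← hPc, leadingCoeff, hPd]
          rw [hlcP]
          have hpow : ((-1 : ℝ)) ^ (q' + 2 - 1) = (-1) * (-1) ^ (q' + 1 - 1) := by
            rw [show q' + 2 - 1 = (q' + 1 - 1) + 1 by omega, pow_succ]
            ring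
          rw [hpow]
          nlinarith [hsign]

/-- In the recursion defining `p_{k,q}`, the polynomial `p_{k,q}` has degree exactly
`2(q-1) - k` for all `0 ≤ k ≤ q-1`. -/
theorem cayleyPoly_natDegree (q k : ℕ) (hq : 1 ≤ q) (hk : k ≤ q - 1) :
    cayleyPoly k q ≠ 0 ∧ (cayleyPoly k q).natDegree = 2 * (q - 1) - k := by
  obtain ⟨h1, h2, _⟩ := cayleyPoly_aux q hq k hk
  exact ⟨h1, h2⟩
end
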